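/- For all integers k ≥ 2, n ≥ 1, p ≥ 0, r ≥ 0, the images of all generators of G(k,n,p,r) other than c₂ and d₂ are trivial: a₁ = b₁ = a₂ = b₂ = c₁ = d₁ = c̃ = d̃ = 1 and c_i = d_i = 1 for every 3 ≤ i ≤ k. In particular, G(k,n,p,r) is generated by the images of c₂ and d₂. (Step in the proof of Lemma 3.3.) -/

import Mathlib

/-- Generators of the presentation: `a1, b1, a2, b2`, the tilde generators
`ct = c̃`, `dt = d̃`, and `c i`, `d i` for `i : Fin k`, where `c i` denotes
`c_{i+1}` (so `c ⟨0,_⟩ = c₁`, `c ⟨1,_⟩ = c₂`, …). -/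
inductive Gen (k : ℕ) : Type
  | a1 | b1 | a2 | b2 | ct | dt
  | c : Fin k → Gen k
  | d : Fin k → Gen k

namespace Gen

variable (k : ℕ)

def A1 : FreeGroup (Gen k) := FreeGroup.of Gen.a1
def B1 : FreeGroup (Gen k) := FreeGroup.of Gen.b1
def A2 : FreeGroup (Gen k) := FreeGroup.of Gen.a2
def B2 : FreeGroup (Gen k) := FreeGroup.of Gen.b2
def Ct : FreeGroup (Gen k) := FreeGroup.of Gen.ct
def Dt : FreeGroup (Gen k) := FreeGroup.of Gen.dt
def C (i : Fin k) : FreeGroup (Gen k) := FreeGroup.of (Gen.c i)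
def D (i : Fin k) : FreeGroup (Gen k) := FreeGroup.of (Gen.d i)

end Gen

open Gen in
open scoped commutatorElement in
/-- The relators of the presentation of `π₁(M)` from Lemma 3.2 (a relation
`w = v` is encoded as the relator `w * v⁻¹`). -/
def rels (k n p r : ℕ) : Set (FreeGroup (Gen k)) :=
  { x |
    -- a₂ = c̃⁻¹ a₁ c̃
    x = A2 k * ((Ct k)⁻¹ * A1 k * Ct k)⁻¹ ∨
    -- b₂ = c̃⁻¹ b₁ c̃
    x = B2 k * ((Ct k)⁻¹ * B1 k * Ct k)⁻¹ ∨
    -- b₁ = c̃⁻¹ b₂ c̃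
    x = B1 k * ((Ct k)⁻¹ * B2 k * Ct k)⁻¹ ∨
    -- [b₂, d̃] = 1
    x = ⁅B2 k, Dt k⁆ ∨
    -- [a₁⁻¹ b₁⁻¹ a₂, d̃] = 1
    x = ⁅(A1 k)⁻¹ * (B1 k)⁻¹ * A2 k, Dt k⁆ ∨
    -- [a₂⁻¹ b₂⁻¹ a₁, d̃] = 1
    x = ⁅(A2 k)⁻¹ * (B2 k)⁻¹ * A1 k, Dt k⁆ ∨
    -- c̃⁻¹ a₁ a₂ c̃ a₁⁻¹ a₂⁻¹ = d̃
    x = (Ct k)⁻¹ * A1 k * A2 k * Ct k * (A1 k)⁻¹ * (A2 k)⁻¹ * (Dt k)⁻¹ ∨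
    -- [a₁, d̃⁻¹] = c̃
    x = ⁅A1 k, (Dt k)⁻¹⁆ * (Ct k)⁻¹ ∨
    -- [b₁, d̃] = 1
    x = ⁅B1 k, Dt k⁆ ∨
    -- [a₁, b₁][a₂, b₂] = 1
    x = ⁅A1 k, B1 k⁆ * ⁅A2 k, B2 k⁆ ∨
    -- [c₁,d₁][c₂,d₂]⋯[c_k,d_k][c̃,d̃] = 1
    x = (List.ofFn fun i : Fin k => ⁅C k i, D k i⁆).prod * ⁅Ct k, Dt k⁆ ∨
    -- relations involving c₁, d₁  (index 0)
    (∃ i : Fin k, (i : ℕ) = 0 ∧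
      (x = ⁅(B1 k)⁻¹, (D k i)⁻¹⁆ * (A1 k)⁻¹ ∨      -- [b₁⁻¹,d₁⁻¹] = a₁
       x = ⁅(A1 k)⁻¹, D k i⁆ * (B1 k)⁻¹ ∨           -- [a₁⁻¹,d₁] = b₁
       x = ⁅(B2 k)⁻¹, (D k i)⁻¹⁆ * (C k i)⁻¹ ∨      -- [b₂⁻¹,d₁⁻¹] = c₁
       x = ⁅B2 k, (C k i)⁻¹⁆ ^ n * (D k i)⁻¹ ∨      -- [b₂,c₁⁻¹]ⁿ = d₁
       x = ⁅A1 k, C k i⁆ ∨ x = ⁅B1 k, C k i⁆ ∨      -- [a₁,c₁] = [b₁,c₁] = 1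
       x = ⁅A2 k, C k i⁆ ∨ x = ⁅A2 k, D k i⁆)) ∨    -- [a₂,c₁] = [a₂,d₁] = 1
    -- relations involving c₂, d₂  (index 1)
    (∃ i : Fin k, (i : ℕ) = 1 ∧
      (x = ⁅(B2 k)⁻¹, (D k i)⁻¹⁆ * ((C k i) ^ p)⁻¹ ∨  -- [b₂⁻¹,d₂⁻¹] = c₂ᵖ
       x = ⁅B2 k, (C k i)⁻¹⁆ * ((D k i) ^ r)⁻¹)) ∨    -- [b₂,c₂⁻¹] = d₂ʳ
    -- relations [b₂⁻¹,d_i⁻¹] = c_i, [b₂,c_i⁻¹] = d_i for 3 ≤ i ≤ k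
    (∃ i : Fin k, 2 ≤ (i : ℕ) ∧
      (x = ⁅(B2 k)⁻¹, (D k i)⁻¹⁆ * (C k i)⁻¹ ∨
       x = ⁅B2 k, (C k i)⁻¹⁆ * (D k i)⁻¹)) ∨
    -- commuting relations for 2 ≤ i ≤ k
    (∃ i : Fin k, 1 ≤ (i : ℕ) ∧
      (x = ⁅A2 k, C k i⁆ ∨ x = ⁅A2 k, D k i⁆ ∨
       x = ⁅A1 k, C k i⁆ ∨ x = ⁅B1 k, D k i⁆ ∨
       x = ⁅A1 k, D k i⁆ ∨ x = ⁅B1 k, C k i⁆)) }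

/-- The group `G(k,n,p,r)` of Lemma 3.2/3.3: the fundamental group of the
surgered manifold, given by the above presentation. -/
abbrev G (k n p r : ℕ) : Type := PresentedGroup (rels k n p r)

/-- The image in `G k n p r` of a generator. -/
abbrev gen (k n p r : ℕ) (g : Gen k) : G k n p r := PresentedGroup.of g


theorem gen_aux {H : Type*} [Group H] (n : ℕ)
    (a b a' b' t s c1 d1 : H)
    (r1 : a' = t⁻¹ * a * t)
    (r2 : b' = t⁻¹ * b * t)
    (r3 : b = t⁻¹ * b' * t)
    (r4 : b' * s = s * b')
    (r5 : (a⁻¹ * b⁻¹ * a') * s = s * (a⁻¹ * b⁻¹ * a'))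
    (r6 : (a'⁻¹ * b'⁻¹ * a) * s = s * (a'⁻¹ * b'⁻¹ * a))
    (r7 : t⁻¹ * a * a' * t * a⁻¹ * a'⁻¹ = s)
    (r8 : a * s⁻¹ * a⁻¹ * s = t)
    (r9 : b * s = s * b)
    (rA : b⁻¹ * d1⁻¹ * b * d1 = a)
    (rB : a⁻¹ * d1 * a * d1⁻¹ = b)
    (rC : b'⁻¹ * d1⁻¹ * b' * d1 = c1)
    (rD : (b' * c1⁻¹ * b'⁻¹ * c1) ^ n = d1)
    (rE : b * c1 = c1 * b) :
    a = 1 ∧ b = 1 ∧ a' = 1 ∧ b' = 1 ∧ t = 1 ∧ s = 1 ∧ c1 = 1 ∧ d1 = 1 := by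
  have c5 : Commute (a⁻¹ * b⁻¹ * a') s := r5
  have c6 : Commute (a'⁻¹ * b'⁻¹ * a) s := r6
  have c4 : Commute b' s := r4
  have c9 : Commute b s := r9
  have c56 : Commute (a⁻¹ * (b⁻¹ * b'⁻¹) * a) s := by
    have h := c5.mul_left c6
    rwa [show (a⁻¹ * b⁻¹ * a') * (a'⁻¹ * b'⁻¹ * a) = a⁻¹ * (b⁻¹ * b'⁻¹) * a from by
      group] at h
  have hAsA : a * s * a⁻¹ = s * t⁻¹ := by rw [← r8]; group
  -- conjugate c56 by a
  have czz : (b⁻¹ * b'⁻¹) * (a * s * a⁻¹) = (a * s * a⁻¹) * (b⁻¹ * b'⁻¹) := by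
    calc (b⁻¹ * b'⁻¹) * (a * s * a⁻¹)
        = a * ((a⁻¹ * (b⁻¹ * b'⁻¹) * a) * s) * a⁻¹ := by group
      _ = a * (s * (a⁻¹ * (b⁻¹ * b'⁻¹) * a)) * a⁻¹ := by rw [c56.eq]
      _ = (a * s * a⁻¹) * (b⁻¹ * b'⁻¹) := by group
  rw [hAsA] at czz
  have cYs : Commute (b⁻¹ * b'⁻¹) s := c9.inv_left.mul_left c4.inv_left
  have cYt : Commute (b⁻¹ * b'⁻¹) t := by
    have h1 : Commute (b⁻¹ * b'⁻¹) (s⁻¹ * (s * t⁻¹)) := cYs.inv_right.mul_right czz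
    rw [show s⁻¹ * (s * t⁻¹) = t⁻¹ from by group] at h1
    simpa using h1.inv_right
  have e1 : t⁻¹ * (b⁻¹ * b'⁻¹) * t = b⁻¹ * b'⁻¹ := by
    calc t⁻¹ * (b⁻¹ * b'⁻¹) * t = t⁻¹ * ((b⁻¹ * b'⁻¹) * t) := by group
      _ = t⁻¹ * (t * (b⁻¹ * b'⁻¹)) := by rw [cYt.eq]
      _ = b⁻¹ * b'⁻¹ := by group
  have e2 : t⁻¹ * (b⁻¹ * b'⁻¹) * t = b'⁻¹ * b⁻¹ := by
    calc t⁻¹ * (b⁻¹ * b'⁻¹) * t = (t⁻¹ * b * t)⁻¹ * (t⁻¹ * b' * t)⁻¹ := by group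
      _ = b'⁻¹ * b⁻¹ := by rw [← r2, ← r3]
  have cBB' : Commute b b' := by
    have h : Commute b⁻¹ b'⁻¹ := e1.symm.trans e2
    simpa using h.inv_left.inv_right
  -- d1 conjugation facts
  have h1 : d1⁻¹ * b * d1 = b * a := by rw [← rA]; group
  have hAD : d1 * a * d1⁻¹ = a * b := by rw [← rB]; group
  have hBD : d1 * b * d1⁻¹ = a⁻¹ := by
    calc d1 * b * d1⁻¹ = d1 * ((b * a) * a⁻¹) * d1⁻¹ := by group
      _ = d1 * ((d1⁻¹ * b * d1) * a⁻¹) * d1⁻¹ := by rw [h1]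
      _ = b * (d1 * a * d1⁻¹)⁻¹ := by group
      _ = b * (a * b)⁻¹ := by rw [hAD]
      _ = a⁻¹ := by group
  have cBc1 : Commute b c1 := rE
  have cBw : Commute b (b' * c1⁻¹ * b'⁻¹ * c1) :=
    ((cBB'.mul_right cBc1.inv_right).mul_right cBB'.inv_right).mul_right cBc1
  have cBd1 : Commute b d1 := by rw [← rD]; exact cBw.pow_right n
  have hb' : d1 * b * d1⁻¹ = b := by
    rw [← cBd1.eq]; group
  have hBA : a⁻¹ = b := hBD.symm.trans hb'
  have h2 : d1 * a * d1⁻¹ = 1 := by rw [hAD, ← hBA]; group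
  have ha : a = 1 := by
    calc a = d1⁻¹ * (d1 * a * d1⁻¹) * d1 := by group
      _ = 1 := by rw [h2]; group
  have hb : b = 1 := by rw [← hBA, ha]; group
  have hb'1 : b' = 1 := by rw [r2, hb]; group
  have ha'1 : a' = 1 := by rw [r1, ha]; group
  have ht : t = 1 := by rw [← r8, ha]; group
  have hs : s = 1 := by rw [← r7, ha, ha'1, ht]; group
  have hc1 : c1 = 1 := by rw [← rC, hb'1]; group
  have hd1 : d1 = 1 := by rw [← rD, hb'1]; simp
  exact ⟨ha, hb, ha'1, hb'1, ht, hs, hc1, hd1⟩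

open Gen in
open scoped commutatorElement in
/-- step of the proof of Lemma 3.3: all generators of
`G(k,n,p,r)` other than `c₂` and `d₂` have trivial image, and consequently
`G(k,n,p,r)` is generated by the images of `c₂` and `d₂`. -/
theorem generators_trivial_except_c2_d2 (k n p r : ℕ) (hk : 2 ≤ k) (hn : 1 ≤ n) :
    gen k n p r Gen.a1 = 1 ∧ gen k n p r Gen.b1 = 1 ∧
    gen k n p r Gen.a2 = 1 ∧ gen k n p r Gen.b2 = 1 ∧
    gen k n p r Gen.ct = 1 ∧ gen k n p r Gen.dt = 1 ∧
    (∀ i : Fin k, (i : ℕ) ≠ 1 →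
      gen k n p r (Gen.c i) = 1 ∧ gen k n p r (Gen.d i) = 1) ∧
    Subgroup.closure
      {gen k n p r (Gen.c ⟨1, by omega⟩), gen k n p r (Gen.d ⟨1, by omega⟩)} = ⊤ := by
  set φ : FreeGroup (Gen k) →* G k n p r := PresentedGroup.mk (rels k n p r) with hφ
  have mk1 : ∀ x ∈ rels k n p r, φ x = 1 := fun x hx =>
    (QuotientGroup.eq_one_iff x).mpr (Subgroup.subset_normalClosure hx)
  have i0 : Fin k := ⟨0, by omega⟩
  clear i0
  set i0 : Fin k := ⟨0, by omega⟩ with hi0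
  -- extract the relations we need
  have h1 := mk1 _ (Or.inl rfl : (A2 k * ((Ct k)⁻¹ * A1 k * Ct k)⁻¹) ∈ rels k n p r)
  have h2 := mk1 _ (Or.inr (Or.inl rfl) :
      (B2 k * ((Ct k)⁻¹ * B1 k * Ct k)⁻¹) ∈ rels k n p r)
  have h3 := mk1 _ (Or.inr (Or.inr (Or.inl rfl)) :
      (B1 k * ((Ct k)⁻¹ * B2 k * Ct k)⁻¹) ∈ rels k n p r)
  have h4 := mk1 _ (Or.inr (Or.inr (Or.inr (Or.inl rfl))) :
      (⁅B2 k, Dt k⁆) ∈ rels k n p r)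
  have h5 := mk1 _ (Or.inr (Or.inr (Or.inr (Or.inr (Or.inl rfl)))) :
      (⁅(A1 k)⁻¹ * (B1 k)⁻¹ * A2 k, Dt k⁆) ∈ rels k n p r)
  have h6 := mk1 _ (Or.inr (Or.inr (Or.inr (Or.inr (Or.inr (Or.inl rfl))))) :
      (⁅(A2 k)⁻¹ * (B2 k)⁻¹ * A1 k, Dt k⁆) ∈ rels k n p r)
  have h7 := mk1 _ (Or.inr (Or.inr (Or.inr (Or.inr (Or.inr (Or.inr (Or.inl rfl)))))) :
      ((Ct k)⁻¹ * A1 k * A2 k * Ct k * (A1 k)⁻¹ * (A2 k)⁻¹ * (Dt k)⁻¹) ∈ rels k n p r)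
  have h8 := mk1 _ (Or.inr (Or.inr (Or.inr (Or.inr (Or.inr (Or.inr (Or.inr (Or.inl rfl))))))) :
      (⁅A1 k, (Dt k)⁻¹⁆ * (Ct k)⁻¹) ∈ rels k n p r)
  have h9 := mk1 _
    (Or.inr (Or.inr (Or.inr (Or.inr (Or.inr (Or.inr (Or.inr (Or.inr (Or.inl rfl)))))))) :
      (⁅B1 k, Dt k⁆) ∈ rels k n p r)
  have hA := mk1 _
    (Or.inr (Or.inr (Or.inr (Or.inr (Or.inr (Or.inr (Or.inr (Or.inr (Or.inr (Or.inr (Or.inr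
      (Or.inl ⟨i0, rfl, Or.inl rfl⟩))))))))))) :
      (⁅(B1 k)⁻¹, (D k i0)⁻¹⁆ * (A1 k)⁻¹) ∈ rels k n p r)
  have hB := mk1 _
    (Or.inr (Or.inr (Or.inr (Or.inr (Or.inr (Or.inr (Or.inr (Or.inr (Or.inr (Or.inr (Or.inr
      (Or.inl ⟨i0, rfl, Or.inr (Or.inl rfl)⟩))))))))))) :
      (⁅(A1 k)⁻¹, D k i0⁆ * (B1 k)⁻¹) ∈ rels k n p r)
  have hC := mk1 _
    (Or.inr (Or.inr (Or.inr (Or.inr (Or.inr (Or.inr (Or.inr (Or.inr (Or.inr (Or.inr (Or.inr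
      (Or.inl ⟨i0, rfl, Or.inr (Or.inr (Or.inl rfl))⟩))))))))))) :
      (⁅(B2 k)⁻¹, (D k i0)⁻¹⁆ * (C k i0)⁻¹) ∈ rels k n p r)
  have hD := mk1 _
    (Or.inr (Or.inr (Or.inr (Or.inr (Or.inr (Or.inr (Or.inr (Or.inr (Or.inr (Or.inr (Or.inr
      (Or.inl ⟨i0, rfl, Or.inr (Or.inr (Or.inr (Or.inl rfl)))⟩))))))))))) :
      (⁅B2 k, (C k i0)⁻¹⁆ ^ n * (D k i0)⁻¹) ∈ rels k n p r)
  have hE := mk1 _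
    (Or.inr (Or.inr (Or.inr (Or.inr (Or.inr (Or.inr (Or.inr (Or.inr (Or.inr (Or.inr (Or.inr
      (Or.inl ⟨i0, rfl, Or.inr (Or.inr (Or.inr (Or.inr (Or.inr (Or.inl rfl)))))⟩))))))))))) :
      (⁅B1 k, C k i0⁆) ∈ rels k n p r)
  simp only [map_mul, map_inv, map_pow, map_commutatorElement, commutatorElement_def,
    inv_inv, mul_inv_eq_one] at h1 h2 h3 h7 h8 hA hB hC hD
  simp only [map_mul, map_inv, map_commutatorElement,
    commutatorElement_eq_one_iff_mul_comm] at h4 h5 h6 h9 hE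
  obtain ⟨ha, hb, ha', hb', ht, hs, hc1, hd1⟩ :=
    gen_aux n (φ (A1 k)) (φ (B1 k)) (φ (A2 k)) (φ (B2 k)) (φ (Ct k)) (φ (Dt k))
      (φ (C k i0)) (φ (D k i0)) h1 h2 h3 h4 h5 h6 h7 h8 h9 hA hB hC hD hE
  have hcd : ∀ i : Fin k, (i : ℕ) ≠ 1 →
      gen k n p r (Gen.c i) = 1 ∧ gen k n p r (Gen.d i) = 1 := by
    intro i hi
    rcases Nat.lt_or_ge (i : ℕ) 2 with hlt | hge
    · have : i = i0 := Fin.ext (show (i : ℕ) = 0 by omega)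
      rw [this]
      exact ⟨hc1, hd1⟩
    · have hdi := mk1 (⁅B2 k, (C k i)⁻¹⁆ * (D k i)⁻¹) (by
        show _ ∨ _
        iterate 13 apply Or.inr
        exact Or.inl ⟨i, hge, Or.inr rfl⟩)
      have hci := mk1 (⁅(B2 k)⁻¹, (D k i)⁻¹⁆ * (C k i)⁻¹) (by
        show _ ∨ _
        iterate 13 apply Or.inr
        exact Or.inl ⟨i, hge, Or.inl rfl⟩)
      simp only [map_mul, map_inv, map_commutatorElement, mul_inv_eq_one] at hdi hci
      rw [hb'] at hdi hci
      simp only [inv_one, commutatorElement_one_left] at hdi hci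
      exact ⟨hci.symm, hdi.symm⟩
  refine ⟨ha, hb, ha', hb', ht, hs, hcd, ?_⟩
  rw [eq_top_iff, ← PresentedGroup.closure_range_of (rels k n p r)]
  rw [Subgroup.closure_le]
  rintro x ⟨g, rfl⟩
  have mem1 : (1 : G k n p r) ∈ Subgroup.closure
      {gen k n p r (Gen.c (⟨1, by omega⟩ : Fin k)), gen k n p r (Gen.d ⟨1, by omega⟩)} :=
    one_mem _
  cases g with
  | a1 =>
    have e : (PresentedGroup.of Gen.a1 : G k n p r) = 1 := ha
    rw [e]; exact mem1
  | b1 =>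
    have e : (PresentedGroup.of Gen.b1 : G k n p r) = 1 := hb
    rw [e]; exact mem1
  | a2 =>
    have e : (PresentedGroup.of Gen.a2 : G k n p r) = 1 := ha'
    rw [e]; exact mem1
  | b2 =>
    have e : (PresentedGroup.of Gen.b2 : G k n p r) = 1 := hb'
    rw [e]; exact mem1
  | ct =>
    have e : (PresentedGroup.of Gen.ct : G k n p r) = 1 := ht
    rw [e]; exact mem1
  | dt =>
    have e : (PresentedGroup.of Gen.dt : G k n p r) = 1 := hs
    rw [e]; exact mem1
  | c i =>
    by_cases hv : (i : ℕ) = 1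
    · have hvv : i = ⟨1, by omega⟩ := Fin.ext hv
      rw [hvv]
      exact Subgroup.subset_closure (Set.mem_insert _ _)
    · have e : (PresentedGroup.of (Gen.c i) : G k n p r) = 1 := (hcd i hv).1
      rw [e]; exact mem1
  | d i =>
    by_cases hv : (i : ℕ) = 1
    · have hvv : i = ⟨1, by omega⟩ := Fin.ext hv
      rw [hvv]
      exact Subgroup.subset_closure (Set.mem_insert_of_mem _ rfl)
    · have e : (PresentedGroup.of (Gen.d i) : G k n p r) = 1 := (hcd i hv).2
      rw [e]; exact mem1
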